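/- arXiv:2206.05118 — 2 statements merged into one kernel-verified Lean document; each statement's English description precedes it below -/
import Mathlib

section
/- For a real t ≥ 2 let B(t) = ∑_{2 ≤ m ≤ ⌊t⌋} 1/ln m. Let g : ℝ → ℝ be continuously differentiable with g'(t) ≥ 0 on [2, ∞), and suppose ∫_2^n (t/ln t)·g'(t) dt → ∞ as n → ∞. Then (∫_2^n B(t)·g'(t) dt)/(∫_2^n (t/ln t)·g'(t) dt) → 1 as n → ∞. -/
open Filter

/-- `B(t) = ∑_{2 ≤ m ≤ ⌊t⌋} 1 / ln m`. -/
noncomputable def invLogPartialSum (t : ℝ) : ℝ :=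
  ∑ m ∈ Finset.Icc 2 ⌊t⌋₊, 1 / Real.log m

lemma B_mono : Monotone invLogPartialSum := by
  intro a b hab
  apply Finset.sum_le_sum_of_subset_of_nonneg
  · exact Finset.Icc_subset_Icc_right (Nat.floor_mono hab)
  · intro m hm _
    have h2 : (2:ℕ) ≤ m := (Finset.mem_Icc.1 hm).1
    have : (0:ℝ) < Real.log m := Real.log_pos (by exact_mod_cast Nat.lt_of_lt_of_le one_lt_two h2)
    positivity

lemma B_lower {t : ℝ} (ht : 3 ≤ t) : (t - 2) / Real.log t ≤ invLogPartialSum t := by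
  have ht1 : (1:ℝ) < t := by linarith
  have hlt : 0 < Real.log t := Real.log_pos ht1
  have hfloor : (2:ℕ) ≤ ⌊t⌋₊ := by
    have := Nat.le_floor (α := ℝ) (n := 3) (by exact_mod_cast ht)
    omega
  have hcard : (Finset.Icc 2 ⌊t⌋₊).card = ⌊t⌋₊ - 1 := by
    rw [Nat.card_Icc]; omega
  have step : ∀ m ∈ Finset.Icc 2 ⌊t⌋₊, 1 / Real.log t ≤ 1 / Real.log m := by
    intro m hm
    obtain ⟨h2, hup⟩ := Finset.mem_Icc.1 hm
    have hm1 : (1:ℝ) < (m:ℝ) := by exact_mod_cast Nat.lt_of_lt_of_le one_lt_two h2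
    have hmt : (m:ℝ) ≤ t := le_trans (Nat.cast_le.2 hup) (Nat.floor_le (by linarith))
    exact one_div_le_one_div_of_le (Real.log_pos hm1) (Real.log_le_log (by linarith) hmt)
  calc (t - 2) / Real.log t ≤ (Finset.Icc 2 ⌊t⌋₊).card * (1 / Real.log t) := by
        rw [hcard]
        rw [div_eq_mul_one_div]
        apply mul_le_mul_of_nonneg_right _ (by positivity)
        have h1 : t - 1 < (⌊t⌋₊ : ℝ) := Nat.sub_one_lt_floor t
        have : ((⌊t⌋₊ - 1 : ℕ) : ℝ) = (⌊t⌋₊:ℝ) - 1 := by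
          have : (1:ℕ) ≤ ⌊t⌋₊ := by omega
          push_cast [this]; ring
        rw [this]; linarith
    _ ≤ invLogPartialSum t := by
        unfold invLogPartialSum
        refine le_trans (le_of_eq ?_) (Finset.sum_le_sum step)
        rw [Finset.sum_const, nsmul_eq_mul]

lemma B_upper {δ t : ℝ} (hδ0 : 0 < δ) (hδ1 : δ < 1) (ht : 3 ≤ t) :
    invLogPartialSum t ≤ t ^ (1-δ) / Real.log 2 + t / ((1-δ) * Real.log t) := by
  have ht0 : (0:ℝ) < t := by linarith
  have hlt : 0 < Real.log t := Real.log_pos (by linarith)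
  have hl2 : 0 < Real.log 2 := Real.log_pos one_lt_two
  set K := max ⌊t ^ (1-δ)⌋₊ 1 with hK
  set n := ⌊t⌋₊ with hn
  have hrle : t ^ (1-δ) ≤ t := by
    calc t ^ (1-δ) ≤ t ^ (1:ℝ) := Real.rpow_le_rpow_of_exponent_le (by linarith) (by linarith)
    _ = t := Real.rpow_one t
  have hn1 : 3 ≤ n := Nat.le_floor (by exact_mod_cast ht)
  have hKn : K ≤ n := max_le (Nat.floor_mono hrle) (by omega)
  have hsum : invLogPartialSum t =
      (∑ m ∈ Finset.Ioc 1 K, 1 / Real.log m) +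
      ∑ m ∈ Finset.Ioc K n, 1 / Real.log m := by
    unfold invLogPartialSum
    rw [← hn, ← Finset.Icc_add_one_left_eq_Ioc]
    exact (Finset.sum_Ioc_consecutive _ (le_max_right _ _) hKn).symm
  have h1 : (∑ m ∈ Finset.Ioc 1 K, 1 / Real.log m) ≤ t ^ (1-δ) / Real.log 2 := by
    have step : ∀ m ∈ Finset.Ioc 1 K, 1 / Real.log (m:ℝ) ≤ 1 / Real.log 2 := by
      intro m hm
      have h2 : 2 ≤ m := (Finset.mem_Ioc.1 hm).1
      exact one_div_le_one_div_of_le hl2 (Real.log_le_log (by norm_num) (by exact_mod_cast h2))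
    calc (∑ m ∈ Finset.Ioc 1 K, 1 / Real.log m) ≤ ∑ m ∈ Finset.Ioc 1 K, 1 / Real.log 2 :=
          Finset.sum_le_sum step
      _ = (K - 1 : ℕ) * (1 / Real.log 2) := by
          rw [Finset.sum_const, Nat.card_Ioc, nsmul_eq_mul]
      _ ≤ t ^ (1-δ) * (1 / Real.log 2) := by
          apply mul_le_mul_of_nonneg_right _ (by positivity)
          have hKr : ((K:ℝ)) ≤ max (t ^ (1-δ)) 1 := by
            rcases max_cases (⌊t ^ (1-δ)⌋₊) 1 with ⟨h, _⟩ | ⟨h, _⟩ <;> rw [hK, h]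
            · exact le_max_of_le_left (Nat.floor_le (by positivity))
            · simp
          have h1le : (1:ℝ) ≤ t ^ (1-δ) := Real.one_le_rpow (by linarith) (by linarith)
          have : ((K - 1 : ℕ) : ℝ) ≤ (K:ℝ) := by
            exact_mod_cast Nat.sub_le K 1
          calc ((K - 1 : ℕ):ℝ) ≤ (K:ℝ) := this
            _ ≤ max (t ^ (1-δ)) 1 := hKr
            _ = t ^ (1-δ) := max_eq_left h1le
      _ = t ^ (1-δ) / Real.log 2 := by ring
  have h2 : (∑ m ∈ Finset.Ioc K n, 1 / Real.log m) ≤ t / ((1-δ) * Real.log t) := by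
    have hpos : 0 < (1-δ) * Real.log t := mul_pos (by linarith) hlt
    have step : ∀ m ∈ Finset.Ioc K n, 1 / Real.log (m:ℝ) ≤ 1 / ((1-δ) * Real.log t) := by
      intro m hm
      obtain ⟨hlo, _⟩ := Finset.mem_Ioc.1 hm
      have hmge : t ^ (1-δ) ≤ (m:ℝ) := by
        have h1 : t ^ (1-δ) < (⌊t ^ (1-δ)⌋₊ : ℝ) + 1 := Nat.lt_floor_add_one _
        have h2 : (⌊t ^ (1-δ)⌋₊ : ℕ) + 1 ≤ K + 1 := by omega
        have h3 : K + 1 ≤ m := hlo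
        have : ((⌊t ^ (1-δ)⌋₊ : ℕ) + 1 : ℝ) ≤ (m:ℝ) := by exact_mod_cast le_trans h2 h3
        linarith [h1]
      have : (1-δ) * Real.log t ≤ Real.log m := by
        rw [← Real.log_rpow ht0]
        exact Real.log_le_log (by positivity) hmge
      exact one_div_le_one_div_of_le hpos this
    calc (∑ m ∈ Finset.Ioc K n, 1 / Real.log m) ≤ ∑ m ∈ Finset.Ioc K n, 1 / ((1-δ) * Real.log t) :=
          Finset.sum_le_sum step
      _ = (n - K : ℕ) * (1 / ((1-δ) * Real.log t)) := by
          rw [Finset.sum_const, Nat.card_Ioc, nsmul_eq_mul]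
      _ ≤ t * (1 / ((1-δ) * Real.log t)) := by
          apply mul_le_mul_of_nonneg_right _ (le_of_lt (one_div_pos.2 hpos))
          calc ((n - K : ℕ):ℝ) ≤ (n:ℝ) := by exact_mod_cast Nat.sub_le n K
            _ ≤ t := Nat.floor_le (by linarith)
      _ = t / ((1-δ) * Real.log t) := by ring
  rw [hsum]; exact add_le_add h1 h2

lemma B_approx {ε : ℝ} (hε : 0 < ε) :
    ∀ᶠ t in atTop, |invLogPartialSum t - t / Real.log t| ≤ ε * (t / Real.log t) := by
  set δ : ℝ := min (ε/4) (1/2) with hδ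
  have hδ0 : 0 < δ := lt_min (by linarith) (by norm_num)
  have hδ1 : δ ≤ 1/2 := min_le_right _ _
  have hδε : δ ≤ ε/4 := min_le_left _ _
  have hev2 : ∀ᶠ t : ℝ in atTop, 2 ≤ ε * t := by
    have := Filter.Tendsto.const_mul_atTop hε (tendsto_id (α := ℝ))
    exact this.eventually_ge_atTop 2
  have hev3 : ∀ᶠ t : ℝ in atTop,
      t ^ (1-δ) / Real.log 2 ≤ (ε/2) * (t / Real.log t) := by
    have hl2 : (0:ℝ) < Real.log 2 := Real.log_pos one_lt_two
    have htend : Tendsto (fun t : ℝ => t ^ (δ/2)) atTop atTop :=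
      tendsto_rpow_atTop (by linarith)
    filter_upwards [eventually_ge_atTop (3:ℝ),
        htend.eventually_ge_atTop (4 / (δ * ε * Real.log 2))] with t ht hC
    have ht0 : (0:ℝ) < t := by linarith
    have hlt : 0 < Real.log t := Real.log_pos (by linarith)
    have hlog : Real.log t ≤ (2/δ) * t ^ (δ/2) := by
      have := Real.log_le_rpow_div (le_of_lt ht0) (show 0 < δ/2 by linarith)
      calc Real.log t ≤ t ^ (δ/2) / (δ/2) := this
        _ = (2/δ) * t ^ (δ/2) := by field_simp
    rw [div_le_iff₀ hl2]
    have key : t ^ (1-δ) * Real.log t ≤ (ε/2) * t * Real.log 2 := by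
      have hsplit : t = t ^ (δ/2) * t ^ (1 - δ/2) := by
        rw [← Real.rpow_add ht0]; norm_num
      have htpos : 0 < t ^ (1 - δ/2) := Real.rpow_pos_of_pos ht0 _
      calc t ^ (1-δ) * Real.log t ≤ t ^ (1-δ) * ((2/δ) * t ^ (δ/2)) :=
            mul_le_mul_of_nonneg_left hlog (by positivity)
        _ = (2/δ) * t ^ (1 - δ/2) := by
            rw [mul_comm (2/δ), ← mul_assoc, ← Real.rpow_add ht0]; ring_nf
        _ = ((ε/2) * Real.log 2 * (4 / (δ * ε * Real.log 2))) * t ^ (1 - δ/2) := by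
            have : (ε/2) * Real.log 2 * (4 / (δ * ε * Real.log 2)) = 2/δ := by
              field_simp; ring
            rw [this]
        _ ≤ ((ε/2) * Real.log 2 * t ^ (δ/2)) * t ^ (1 - δ/2) := by
            apply mul_le_mul_of_nonneg_right _ (le_of_lt htpos)
            apply mul_le_mul_of_nonneg_left hC (by positivity)
        _ = (ε/2) * t * Real.log 2 := by
            rw [mul_assoc, ← Real.rpow_add ht0]; norm_num; ring
    calc t ^ (1-δ) ≤ (ε/2) * t * Real.log 2 / Real.log t := by
          rw [le_div_iff₀ hlt]; exact key
      _ = (ε/2) * (t / Real.log t) * Real.log 2 := by ring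
  filter_upwards [eventually_ge_atTop (3:ℝ), hev2, hev3] with t ht h2 h3
  have ht0 : (0:ℝ) < t := by linarith
  have hlt : 0 < Real.log t := Real.log_pos (by linarith)
  rw [abs_le]
  constructor
  · -- lower: B t ≥ (t-2)/log t = t/log t - 2/log t ≥ t/log t - ε t/log t
    have hlow := B_lower ht
    have : t / Real.log t - ε * (t / Real.log t) ≤ (t - 2) / Real.log t := by
      have e : t / Real.log t - ε * (t / Real.log t) = (t - ε * t) / Real.log t := by ring
      rw [e]
      gcongr <;> linarith
    linarith
  · -- upper
    have hup := B_upper hδ0 (by linarith) ht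
    have h1δ : (1:ℝ) - δ ≥ 1/2 := by linarith
    have hfrac : t / ((1-δ) * Real.log t) ≤ (1 + ε/2) * (t / Real.log t) := by
      rw [div_le_iff₀ (mul_pos (by linarith : (0:ℝ) < 1-δ) hlt)]
      have expand : (1 + ε/2) * (t / Real.log t) * ((1-δ) * Real.log t)
          = (1 + ε/2) * (1-δ) * t := by
        field_simp
      rw [expand]
      nlinarith [hlt, ht0]
    have : invLogPartialSum t ≤ (ε/2) * (t / Real.log t) + (1 + ε/2) * (t / Real.log t) :=
      le_trans hup (add_le_add h3 hfrac)
    have heq : (ε/2) * (t / Real.log t) + (1 + ε/2) * (t / Real.log t)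
        = t / Real.log t + ε * (t / Real.log t) := by ring
    linarith [this, heq ▸ this]

theorem stmt16 (g g' : ℝ → ℝ)
    (hderiv : ∀ t ∈ Set.Ici (2 : ℝ), HasDerivAt g (g' t) t)
    (hcont : ContinuousOn g' (Set.Ici (2 : ℝ)))
    (hg' : ∀ t ∈ Set.Ici (2 : ℝ), 0 ≤ g' t)
    (hint : Tendsto (fun n : ℕ => ∫ t in (2 : ℝ)..(n : ℝ), t / Real.log t * g' t)
      atTop atTop) :
    Tendsto (fun n : ℕ =>
        (∫ t in (2 : ℝ)..(n : ℝ), invLogPartialSum t * g' t) /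
          ∫ t in (2 : ℝ)..(n : ℝ), t / Real.log t * g' t)
      atTop (nhds 1) := by
  set φ : ℝ → ℝ := fun t => t / Real.log t with hφ
  -- continuity of φ on Ici 2
  have hφcont : ContinuousOn φ (Set.Ici (2:ℝ)) := by
    apply ContinuousOn.div continuousOn_id
    · intro t ht
      exact (Real.continuousAt_log (by simp at ht; intro h; rw [h] at ht; norm_num at ht)).continuousWithinAt
    · intro t ht
      exact ne_of_gt (Real.log_pos (lt_of_lt_of_le one_lt_two ht))
  have huIcc : ∀ a b : ℝ, 2 ≤ a → 2 ≤ b → Set.uIcc a b ⊆ Set.Ici (2:ℝ) := by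
    intro a b ha hb x hx
    rw [Set.uIcc] at hx
    exact le_trans (le_min ha hb) hx.1
  -- integrability
  have hIB : ∀ a b : ℝ, 2 ≤ a → 2 ≤ b →
      IntervalIntegrable (fun t => invLogPartialSum t * g' t) MeasureTheory.volume a b := by
    intro a b ha hb
    exact ((B_mono.monotoneOn _).intervalIntegrable).mul_continuousOn
      (hcont.mono (huIcc a b ha hb))
  have hIφ : ∀ a b : ℝ, 2 ≤ a → 2 ≤ b →
      IntervalIntegrable (fun t => φ t * g' t) MeasureTheory.volume a b := by
    intro a b ha hb
    exact ((hφcont.mono (huIcc a b ha hb)).mul (hcont.mono (huIcc a b ha hb))).intervalIntegrable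
  -- nonnegativity of integrand
  have hφg'_nonneg : ∀ t : ℝ, 2 ≤ t → 0 ≤ φ t * g' t := by
    intro t ht
    have hlt : 0 < Real.log t := Real.log_pos (by linarith)
    exact mul_nonneg (div_nonneg (by linarith) (le_of_lt hlt)) (hg' t ht)
  rw [Metric.tendsto_atTop]
  intro ε hε
  have hε₁ : 0 < ε/3 := by linarith
  obtain ⟨T₀, hT₀⟩ := eventually_atTop.1 ((B_approx hε₁).and (eventually_ge_atTop (3:ℝ)))
  set T := max T₀ 3 with hT
  have hT3 : (3:ℝ) ≤ T := le_max_right _ _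
  have hT2 : (2:ℝ) ≤ T := by linarith
  have happrox : ∀ t : ℝ, T ≤ t →
      |invLogPartialSum t - φ t| ≤ (ε/3) * φ t := by
    intro t ht
    exact (hT₀ t (le_trans (le_max_left _ _) ht)).1
  set C : ℝ := |(∫ t in (2:ℝ)..T, invLogPartialSum t * g' t) - ∫ t in (2:ℝ)..T, φ t * g' t|
    with hC
  have hC0 : 0 ≤ C := abs_nonneg _
  -- eventual conditions
  have hev1 : ∀ᶠ n : ℕ in atTop, T ≤ (n:ℝ) :=
    tendsto_natCast_atTop_atTop.eventually_ge_atTop T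
  have hev2 : ∀ᶠ n : ℕ in atTop,
      max 1 (3*C/ε + 1) ≤ ∫ t in (2:ℝ)..(n:ℝ), φ t * g' t :=
    hint.eventually_ge_atTop _
  obtain ⟨N, hN⟩ := eventually_atTop.1 (hev1.and hev2)
  refine ⟨N, fun n hn => ?_⟩
  obtain ⟨hn1, hn2⟩ := hN n hn
  have hn2' : (2:ℝ) ≤ (n:ℝ) := by linarith
  set I : ℝ := ∫ t in (2:ℝ)..(n:ℝ), φ t * g' t with hI
  set S : ℝ := ∫ t in (2:ℝ)..(n:ℝ), invLogPartialSum t * g' t with hS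
  have hI1 : (1:ℝ) ≤ I := le_trans (le_max_left _ _) hn2
  have hIC : 3*C/ε + 1 ≤ I := le_trans (le_max_right _ _) hn2
  have hIpos : 0 < I := by linarith
  -- split integrals
  have hIsplit : (∫ t in (2:ℝ)..T, φ t * g' t) + (∫ t in T..(n:ℝ), φ t * g' t) = I :=
    intervalIntegral.integral_add_adjacent_intervals (hIφ 2 T (by norm_num) hT2)
      (hIφ T n hT2 hn2')
  have hSsplit : (∫ t in (2:ℝ)..T, invLogPartialSum t * g' t)
      + (∫ t in T..(n:ℝ), invLogPartialSum t * g' t) = S :=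
    intervalIntegral.integral_add_adjacent_intervals (hIB 2 T (by norm_num) hT2)
      (hIB T n hT2 hn2')
  have h2T_nonneg : 0 ≤ ∫ t in (2:ℝ)..T, φ t * g' t :=
    intervalIntegral.integral_nonneg hT2 (fun t ht => hφg'_nonneg t ht.1)
  -- middle estimate
  have hTn : |(∫ t in T..(n:ℝ), invLogPartialSum t * g' t)
      - ∫ t in T..(n:ℝ), φ t * g' t| ≤ (ε/3) * ∫ t in T..(n:ℝ), φ t * g' t := by
    rw [← intervalIntegral.integral_sub (hIB T n hT2 hn2') (hIφ T n hT2 hn2')]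
    calc |∫ t in T..(n:ℝ), (invLogPartialSum t * g' t - φ t * g' t)|
        ≤ ∫ t in T..(n:ℝ), |invLogPartialSum t * g' t - φ t * g' t| :=
          intervalIntegral.abs_integral_le_integral_abs (by linarith)
      _ ≤ ∫ t in T..(n:ℝ), (ε/3) * (φ t * g' t) := by
          apply intervalIntegral.integral_mono_on (by linarith)
          · exact ((hIB T n hT2 hn2').sub (hIφ T n hT2 hn2')).abs
          · exact ((hIφ T n hT2 hn2').const_mul _)
          · intro t ht
            have ht2 : (2:ℝ) ≤ t := le_trans hT2 ht.1
            have := happrox t ht.1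
            calc |invLogPartialSum t * g' t - φ t * g' t|
                = |invLogPartialSum t - φ t| * g' t := by
                  rw [← sub_mul, abs_mul, abs_of_nonneg (hg' t ht2)]
              _ ≤ ((ε/3) * φ t) * g' t :=
                  mul_le_mul_of_nonneg_right this (hg' t ht2)
              _ = (ε/3) * (φ t * g' t) := by ring
      _ = (ε/3) * ∫ t in T..(n:ℝ), φ t * g' t := intervalIntegral.integral_const_mul _ _
  have hTnI : (∫ t in T..(n:ℝ), φ t * g' t) ≤ I := by linarith [hIsplit, h2T_nonneg]
  have hTn_nonneg : 0 ≤ ∫ t in T..(n:ℝ), φ t * g' t :=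
    intervalIntegral.integral_nonneg (by linarith) (fun t ht => hφg'_nonneg t (le_trans hT2 ht.1))
  have hkey : |S - I| ≤ C + (ε/3) * I := by
    have e1 : S - I = ((∫ t in (2:ℝ)..T, invLogPartialSum t * g' t)
        - ∫ t in (2:ℝ)..T, φ t * g' t)
        + ((∫ t in T..(n:ℝ), invLogPartialSum t * g' t)
        - ∫ t in T..(n:ℝ), φ t * g' t) := by
      rw [← hIsplit, ← hSsplit]; ring
    calc |S - I| ≤ C + |(∫ t in T..(n:ℝ), invLogPartialSum t * g' t)
        - ∫ t in T..(n:ℝ), φ t * g' t| := by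
          rw [e1]; exact abs_add_le _ _
      _ ≤ C + (ε/3) * ∫ t in T..(n:ℝ), φ t * g' t := by linarith [hTn]
      _ ≤ C + (ε/3) * I := by nlinarith [hTnI]
  -- conclude
  rw [Real.dist_eq]
  have e2 : S / I - 1 = (S - I) / I := by field_simp
  rw [e2, abs_div, abs_of_pos hIpos]
  rw [div_lt_iff₀ hIpos]
  have : 3*C ≤ ε * I - ε := by
    have := mul_le_mul_of_nonneg_left hIC (le_of_lt hε)
    calc 3*C = ε * (3*C/ε) := by field_simp
      _ ≤ ε * I - ε := by nlinarith
  nlinarith [hkey, hI1]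
end

section
/- Let f be a set of natural numbers containing infinitely many primes, let g : ℕ → ℝ, let a : ℕ → ℝ be a sequence with a_p = 1 for every prime p ∈ f, and let b : ℕ → ℝ be a sequence with b_n → 0 as n → ∞. For n ≥ 1 set S_a(n) = ∑_{m=1}^n a_m·g(m) and S_b(n) = ∑_{m=1}^n b_m·g(m), and suppose S_b(n) ≠ 0 for all sufficiently large n and S_a(n)/S_b(n) → 1 as n → ∞. Then |g(p)| / |S_b(p)| → 0 as p → ∞ through primes p ∈ f; that is, for every ε > 0 there exists N such that every prime p ∈ f with p ≥ N satisfies |g(p)|/|S_b(p)| < ε. -/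
open Filter

lemma aux19 (gp A A' B B' bp ε : ℝ) (hB : B ≠ 0) (hB' : B' ≠ 0)
    (hkey : gp * (B' - A' * bp) = A * B' - A' * B)
    (hbp : |bp| < 1/2)
    (hr : |A/B - 1| < min (ε/8) (1/4))
    (hr' : |A'/B' - 1| < min (ε/8) (1/4))
    (hε : 0 < ε) : |gp| / |B| < ε := by
  have hmin1 : min (ε/8) (1/4 : ℝ) ≤ ε/8 := min_le_left _ _
  have hmin2 : min (ε/8) (1/4 : ℝ) ≤ 1/4 := min_le_right _ _
  set r := A/B with hrdef
  set r' := A'/B' with hr'def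
  have h2 : gp * (1 - r' * bp) = (r - r') * B := by
    rw [hrdef, hr'def]
    field_simp
    linear_combination hkey
  have h3 : |gp| * |1 - r'*bp| = |r - r'| * |B| := by
    rw [← abs_mul, ← abs_mul, h2]
  have hr'abs : |r'| < 5/4 := by
    have h := abs_sub_abs_le_abs_sub r' 1
    simp only [abs_one] at h
    linarith
  have h4 : (3:ℝ)/8 ≤ |1 - r'*bp| := by
    have h5 : |r'*bp| < 5/8 := by
      rw [abs_mul]
      nlinarith [abs_nonneg r', abs_nonneg bp]
    have h6 := abs_sub_abs_le_abs_sub (1:ℝ) (r'*bp)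
    simp only [abs_one] at h6
    linarith
  have h5 : |r - r'| < ε/4 := by
    have h7 := abs_sub_le r 1 r'
    have h8 : |1 - r'| = |r' - 1| := abs_sub_comm _ _
    linarith
  have hBpos : 0 < |B| := abs_pos.mpr hB
  rw [div_lt_iff₀ hBpos]
  nlinarith [mul_le_mul_of_nonneg_left h4 (abs_nonneg gp),
    mul_lt_mul_of_pos_right h5 hBpos, h3, hε.le, hBpos]

theorem stmt19 (f : Set ℕ) (hf : {p : ℕ | p.Prime ∧ p ∈ f}.Infinite)
    (g a b : ℕ → ℝ)
    (ha : ∀ p : ℕ, p.Prime → p ∈ f → a p = 1)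
    (hb : Tendsto b atTop (nhds 0))
    (hSb : ∀ᶠ n : ℕ in atTop, (∑ m ∈ Finset.Icc 1 n, b m * g m) ≠ 0)
    (hratio : Tendsto (fun n : ℕ =>
        (∑ m ∈ Finset.Icc 1 n, a m * g m) / ∑ m ∈ Finset.Icc 1 n, b m * g m)
      atTop (nhds 1)) :
    ∀ ε : ℝ, 0 < ε → ∃ N : ℕ, ∀ p : ℕ, p.Prime → p ∈ f → N ≤ p →
      |g p| / |∑ m ∈ Finset.Icc 1 p, b m * g m| < ε := by
  intro ε hε
  obtain ⟨N₁, hN₁⟩ := eventually_atTop.mp hSb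
  have hδ : 0 < min (ε/8) (1/4 : ℝ) := lt_min (by linarith) (by norm_num)
  obtain ⟨N₂, hN₂⟩ := Metric.tendsto_atTop.mp hratio _ hδ
  obtain ⟨N₃, hN₃⟩ := Metric.tendsto_atTop.mp hb (1/2) (by norm_num)
  refine ⟨max N₁ (max N₂ N₃) + 2, ?_⟩
  intro p hp hpf hNp
  obtain ⟨n, rfl⟩ := Nat.exists_eq_succ_of_ne_zero hp.pos.ne'
  have hn : max N₁ (max N₂ N₃) + 1 ≤ n := by omega
  have hn1 : N₁ ≤ n := by omega
  have hn2 : N₂ ≤ n := by omega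
  have hn3 : N₃ ≤ n + 1 := by omega
  have hA : ∑ m ∈ Finset.Icc 1 (n+1), a m * g m
      = (∑ m ∈ Finset.Icc 1 n, a m * g m) + g (n+1) := by
    rw [Finset.sum_Icc_succ_top (by omega : 1 ≤ n + 1), ha _ hp hpf, one_mul]
  have hB : ∑ m ∈ Finset.Icc 1 (n+1), b m * g m
      = (∑ m ∈ Finset.Icc 1 n, b m * g m) + b (n+1) * g (n+1) :=
    Finset.sum_Icc_succ_top (by omega) _
  have hd2 := hN₂ (n+1) (by omega)
  have hd2' := hN₂ n hn2
  have hd3 := hN₃ (n+1) hn3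
  rw [Real.dist_eq] at hd2 hd2'
  rw [Real.dist_0_eq_abs] at hd3
  refine aux19 _ _ _ _ _ _ _ (hN₁ (n+1) (by omega)) (hN₁ n hn1) ?_ hd3 hd2 hd2' hε
  rw [hA, hB]; ring
end
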